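/- Let J(z) be the depth-α continued fraction with indeterminate coefficients Y_1,…,Y_{2α−1} and J̃(z) the one with dual coefficients Ỹ_{2i−1} = 1/Y_{2i−1}, Ỹ_{2i} = Y_{2i}/(Y_{2i−1}Y_{2i+1}). Then, as rational functions of z, J̃(z) = −(Y_1/z)·J(1/z), and Y_1 = −1/lim_{z→∞} z·J(z). -/

import Mathlib

/-- finite continued fraction, from the bottom. -/
def cfAux {K : Type*} [CommRing K] [Inv K] (z : K) (Y : ℕ → K) : ℕ → ℕ → K
  | 0, s => (1 - z * Y s)⁻¹
  | n + 1, s => (1 - z * Y s - z * Y (s + 1) * cfAux z Y n (s + 2))⁻¹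

lemma key_step {K : Type*} [Field K] (x w E : K) (hw : w ≠ 0) :
    (E / x)⁻¹ = -(x / w) * ((-E) / w)⁻¹ := by
  rw [inv_div, inv_div, div_neg, neg_mul_neg, div_mul_div_comm, mul_comm x w,
    mul_div_mul_left _ _ hw]

lemma cfAux_dual {K : Type*} [Field K] (z : K) (hz : z ≠ 0) (c ct : ℕ → K)
    (hc : ∀ i, c i ≠ 0)
    (hodd : ∀ i, Odd i → ct i = (c i)⁻¹)
    (heven : ∀ i, ¬ Odd i → ct i = c i / (c (i - 1) * c (i + 1))) :
    ∀ n s : ℕ, Odd s → cfAux z ct n s = -(c s / z) * cfAux z⁻¹ c n s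
  | 0, s, hs => by
    rw [cfAux, cfAux, hodd s hs,
      show 1 - z * (c s)⁻¹ = (c s - z) / c s by field_simp [hc s],
      show 1 - z⁻¹ * c s = (-(c s - z)) / z by field_simp [hz]; ring]
    exact key_step _ _ _ hz
  | n + 1, s, hs => by
    have hs1 : ¬ Odd (s + 1) := by simp [Nat.odd_add_one, hs]
    have hs2 : Odd (s + 2) := by
      obtain ⟨k, hk⟩ := hs; exact ⟨k + 1, by omega⟩
    have IH := cfAux_dual z hz c ct hc hodd heven n (s + 2) hs2
    rw [cfAux, cfAux, IH, hodd s hs, heven (s + 1) hs1]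
    have hsub : s + 1 - 1 = s := by omega
    rw [hsub]
    set A := cfAux z⁻¹ c n (s + 2) with hA
    rw [show 1 - z * (c s)⁻¹ - z * (c (s + 1) / (c s * c (s + 1 + 1))) *
          (-(c (s + 2) / z) * A) = (c s - z + c (s + 1) * A) / c s by
        have h1 := hc s; have h2 := hc (s + 2)
        have : s + 1 + 1 = s + 2 := rfl
        rw [this]; field_simp; ring,
      show 1 - z⁻¹ * c s - z⁻¹ * c (s + 1) * A =
          (-(c s - z + c (s + 1) * A)) / z by field_simp; ring]
    exact key_step _ _ _ hz

lemma cfAux_reg {F : Type*} [Field F] (c : ℕ → F) :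
    ∀ n s : ℕ, ∃ p q : Polynomial F, p.eval 0 = 1 ∧ q.eval 0 = 1 ∧
      cfAux (RatFunc.X : RatFunc F) (fun i => RatFunc.C (c i)) n s =
        algebraMap (Polynomial F) (RatFunc F) p / algebraMap (Polynomial F) (RatFunc F) q
  | 0, s => by
    refine ⟨1, 1 - Polynomial.X * Polynomial.C (c s), by simp, by simp, ?_⟩
    rw [cfAux, map_sub, map_one, map_mul, RatFunc.algebraMap_X, RatFunc.algebraMap_C,
      one_div]
  | n + 1, s => by
    obtain ⟨p, q, hp, hq, h⟩ := cfAux_reg c n (s + 2)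
    have hq0 : q ≠ 0 := fun h0 => by simp [h0] at hq
    have hQ : algebraMap (Polynomial F) (RatFunc F) q ≠ 0 := RatFunc.algebraMap_ne_zero hq0
    refine ⟨q, q - Polynomial.X * Polynomial.C (c s) * q
        - Polynomial.X * Polynomial.C (c (s + 1)) * p, hq, by simp [hq], ?_⟩
    rw [cfAux, h,
      show (1 : RatFunc F) - RatFunc.X * RatFunc.C (c s)
          - RatFunc.X * RatFunc.C (c (s + 1)) *
            (algebraMap (Polynomial F) (RatFunc F) p / algebraMap (Polynomial F) (RatFunc F) q) =
          algebraMap (Polynomial F) (RatFunc F)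
            (q - Polynomial.X * Polynomial.C (c s) * q
              - Polynomial.X * Polynomial.C (c (s + 1)) * p) /
            algebraMap (Polynomial F) (RatFunc F) q by
        rw [eq_div_iff hQ]
        simp only [map_sub, map_mul, RatFunc.algebraMap_X, RatFunc.algebraMap_C]
        field_simp,
      inv_div]

lemma eval_algebraMap_div {F : Type*} [Field F] (a : F) (p q : Polynomial F)
    (hq : q.eval a ≠ 0) :
    RatFunc.eval (RingHom.id F) a
        (algebraMap (Polynomial F) (RatFunc F) p / algebraMap (Polynomial F) (RatFunc F) q) =
      p.eval a / q.eval a := by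
  set r := algebraMap (Polynomial F) (RatFunc F) p / algebraMap (Polynomial F) (RatFunc F) q
    with hr
  have hq0 : q ≠ 0 := fun h0 => by simp [h0] at hq
  obtain ⟨t, ht⟩ := RatFunc.denom_div_dvd p q
  have hde : r.denom.eval a ≠ 0 := fun h0 => hq (by rw [ht, Polynomial.eval_mul, h0, zero_mul])
  have hcross : r.num * q = p * r.denom := by
    apply RatFunc.algebraMap_injective
    rw [map_mul, map_mul]
    have h2 : algebraMap (Polynomial F) (RatFunc F) r.num /
        algebraMap (Polynomial F) (RatFunc F) r.denom =
        algebraMap (Polynomial F) (RatFunc F) p / algebraMap (Polynomial F) (RatFunc F) q :=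
      (RatFunc.num_div_denom r).trans hr
    rw [div_eq_div_iff (RatFunc.algebraMap_ne_zero (RatFunc.denom_ne_zero r))
        (RatFunc.algebraMap_ne_zero hq0)] at h2
    exact h2
  have hev : r.num.eval a * q.eval a = p.eval a * r.denom.eval a := by
    have := congrArg (Polynomial.eval a) hcross
    simpa [Polynomial.eval_mul] using this
  have hid : ∀ P : Polynomial F, Polynomial.eval₂ (RingHom.id F) a P = P.eval a :=
    fun P => rfl
  rw [RatFunc.eval, hid, hid, div_eq_div_iff hde hq]
  exact hev

theorem stmt18 {F : Type*} [Field F] (Y : ℕ → F) (hY : ∀ i, Y i ≠ 0)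
    (α : ℕ) (hα : 1 ≤ α)
    (Yt : ℕ → F)
    (hYt : Yt = fun i => if Odd i then (Y i)⁻¹ else Y i / (Y (i - 1) * Y (i + 1)))
    (J Jt Jinv : RatFunc F)
    (hJ : J = cfAux (RatFunc.X : RatFunc F) (fun i => RatFunc.C (Y i)) (α - 1) 1)
    (hJt : Jt = cfAux (RatFunc.X : RatFunc F) (fun i => RatFunc.C (Yt i)) (α - 1) 1)
    (hJinv : Jinv = cfAux ((RatFunc.X : RatFunc F)⁻¹) (fun i => RatFunc.C (Y i)) (α - 1) 1) :
    Jt = -(RatFunc.C (Y 1) / RatFunc.X) * Jinv ∧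
    Y 1 = -(RatFunc.eval (RingHom.id F) 0 (RatFunc.X⁻¹ * Jinv))⁻¹ := by
  have hC : ∀ i, (RatFunc.C (Y i) : RatFunc F) ≠ 0 := fun i => by
    simpa using hY i
  have hdual := cfAux_dual (RatFunc.X : RatFunc F) RatFunc.X_ne_zero
    (fun i => RatFunc.C (Y i)) (fun i => RatFunc.C (Yt i)) hC
    (fun i hi => by simp only [hYt, if_pos hi, map_inv₀])
    (fun i hi => by simp only [hYt, if_neg hi, map_div₀, map_mul])
    (α - 1) 1 odd_one
  have claim1 : Jt = -(RatFunc.C (Y 1) / RatFunc.X) * Jinv := by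
    rw [hJt, hJinv]; exact hdual
  refine ⟨claim1, ?_⟩
  obtain ⟨p, q, hp, hq, hJt2⟩ := cfAux_reg Yt (α - 1) 1
  have hXJ : RatFunc.X⁻¹ * Jinv =
      algebraMap (Polynomial F) (RatFunc F) (-p) /
        algebraMap (Polynomial F) (RatFunc F) (Polynomial.C (Y 1) * q) := by
    have hq0 : q ≠ 0 := fun h0 => by simp [h0] at hq
    have hQ : algebraMap (Polynomial F) (RatFunc F) q ≠ 0 := RatFunc.algebraMap_ne_zero hq0
    have h1 : Jt = -(RatFunc.C (Y 1)) * (RatFunc.X⁻¹ * Jinv) := by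
      rw [claim1, div_eq_mul_inv]; ring
    have h2 : RatFunc.X⁻¹ * Jinv = -(RatFunc.C (Y 1))⁻¹ * Jt := by
      rw [h1, neg_mul, neg_mul, mul_neg, neg_neg, ← mul_assoc,
        inv_mul_cancel₀ (hC 1), one_mul]
    rw [h2, hJt, hJt2, map_neg, map_mul, RatFunc.algebraMap_C]
    field_simp [hC 1]
  rw [hXJ, eval_algebraMap_div]
  · simp only [Polynomial.eval_neg, Polynomial.eval_mul, Polynomial.eval_C, hp, hq, mul_one]
    field_simp
  · simp [hq, hY 1]
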